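/- Let n be even and let x satisfy 6 ≤ x ≤ n-4. Then the sequence (n-4, n-4, n-4, x-3, …, x-3) of length n-3 (with n-6 copies of x-3) is graphic. -/

import Mathlib

open Finset

/-- A finite list of naturals is graphic if it is realized as the degree sequence of a
simple graph. -/
def IsGraphicList (l : List ℕ) : Prop :=
  ∃ (G : SimpleGraph (Fin l.length)) (_ : DecidableRel G.Adj), ∀ i, G.degree i = l.get i

/-- connection predicate for a `d`-regular circulant graph on `ZMod m` (`m` even). -/
def midp (m d : ℕ) (u : ZMod m) : Prop :=
  u.val ≠ 0 ∧ (u.val ≤ d / 2 ∨ m - d / 2 ≤ u.val ∨ (d % 2 = 1 ∧ 2 * u.val = m))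

instance (m d : ℕ) : DecidablePred (midp m d) := fun u => by
  unfold midp; infer_instance

lemma midp_neg {m d : ℕ} [NeZero m] {u : ZMod m} (h : midp m d u) : midp m d (-u) := by
  obtain ⟨h0, h⟩ := h
  have hu : u ≠ 0 := fun hu => h0 (by simp [hu])
  have hval : (-u).val = m - u.val := by rw [ZMod.neg_val]; simp [hu]
  have hlt : u.val < m := ZMod.val_lt u
  rw [midp, hval]
  omega

lemma card_midp {m d : ℕ} [NeZero m] (hme : Even m) (hd : d < m) :
    (univ.filter (midp m d)).card = d := by
  have hm : 0 < m := Nat.pos_of_ne_zero (NeZero.ne m)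
  obtain ⟨m2, hm2⟩ := hme
  have h1 : (univ.filter (midp m d)).card = ((range m).filter
      (fun k => k ≠ 0 ∧ (k ≤ d / 2 ∨ m - d / 2 ≤ k ∨ (d % 2 = 1 ∧ 2 * k = m)))).card := by
    apply Finset.card_bij (fun u _ => u.val)
    · intro u hu
      simp only [mem_filter, mem_univ, true_and, midp] at hu
      simp only [mem_filter, mem_range]
      exact ⟨ZMod.val_lt u, hu⟩
    · intro u _ v _ h
      exact ZMod.val_injective m h
    · intro k hk
      simp only [mem_filter, mem_range] at hk
      refine ⟨(k : ZMod m), ?_, ZMod.val_cast_of_lt hk.1⟩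
      simp only [mem_filter, mem_univ, true_and, midp, ZMod.val_cast_of_lt hk.1]
      exact hk.2
  rw [h1]
  rcases Nat.even_or_odd d with hd2 | hd2
  · obtain ⟨e, he⟩ := hd2
    have hset : ((range m).filter
        (fun k => k ≠ 0 ∧ (k ≤ d / 2 ∨ m - d / 2 ≤ k ∨ (d % 2 = 1 ∧ 2 * k = m)))) =
        Icc 1 (d / 2) ∪ Icc (m - d / 2) (m - 1) := by
      ext k
      simp only [mem_filter, mem_range, mem_union, mem_Icc]
      omega
    have hdisj : Disjoint (Icc 1 (d / 2)) (Icc (m - d / 2) (m - 1)) := by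
      rw [Finset.disjoint_left]
      intro a ha hb
      simp only [mem_Icc] at ha hb
      omega
    rw [hset, Finset.card_union_of_disjoint hdisj, Nat.card_Icc, Nat.card_Icc]
    omega
  · obtain ⟨e, he⟩ := hd2
    have hset : ((range m).filter
        (fun k => k ≠ 0 ∧ (k ≤ d / 2 ∨ m - d / 2 ≤ k ∨ (d % 2 = 1 ∧ 2 * k = m)))) =
        (Icc 1 (d / 2) ∪ Icc (m - d / 2) (m - 1)) ∪ {m / 2} := by
      ext k
      simp only [mem_filter, mem_range, mem_union, mem_Icc, mem_singleton]
      omega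
    have hdisj1 : Disjoint (Icc 1 (d / 2)) (Icc (m - d / 2) (m - 1)) := by
      rw [Finset.disjoint_left]
      intro a ha hb
      simp only [mem_Icc] at ha hb
      omega
    have hdisj2 : Disjoint (Icc 1 (d / 2) ∪ Icc (m - d / 2) (m - 1)) ({m / 2} : Finset ℕ) := by
      rw [Finset.disjoint_left]
      intro a ha hb
      simp only [mem_union, mem_Icc] at ha
      simp only [mem_singleton] at hb
      omega
    rw [hset, Finset.card_union_of_disjoint hdisj2, Finset.card_union_of_disjoint hdisj1,
      Nat.card_Icc, Nat.card_Icc, Finset.card_singleton]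
    omega

/-- circulant `d`-regular graph on `ZMod m` for even `m`. -/
def circG (m d : ℕ) [NeZero m] : SimpleGraph (ZMod m) where
  Adj z w := midp m d (z - w)
  symm := by
    constructor
    intro z w h
    have := midp_neg h
    rwa [neg_sub] at this
  loopless := by
    constructor
    intro z h
    rw [sub_self] at h
    exact h.1 (by simp)

instance (m d : ℕ) [NeZero m] : DecidableRel (circG m d).Adj :=
  fun z w => inferInstanceAs (Decidable (midp m d (z - w)))

lemma circG_adj {m d : ℕ} [NeZero m] (z w : ZMod m) :
    (circG m d).Adj z w ↔ midp m d (z - w) := Iff.rfl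

lemma circG_degree {m d : ℕ} [NeZero m] (hme : Even m) (hd : d < m) (z : ZMod m) :
    (circG m d).degree z = d := by
  refine Eq.trans ?_ (card_midp hme hd)
  rw [SimpleGraph.degree]
  apply Finset.card_bij (fun w _ => z - w)
  · intro w hw
    rw [SimpleGraph.mem_neighborFinset, circG_adj] at hw
    simp only [mem_filter, mem_univ, true_and]
    exact hw
  · intro a _ b _ h
    have : z - (z - a) = z - (z - b) := by rw [h]
    simpa using this
  · intro u hu
    simp only [mem_filter, mem_univ, true_and] at hu
    refine ⟨z - u, ?_, by ring⟩
    rw [SimpleGraph.mem_neighborFinset, circG_adj]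
    simpa using hu

/-- three vertices joined to everything, plus a circulant graph on the rest. -/
def coneG (m d : ℕ) [NeZero m] : SimpleGraph (Fin (3 + m)) where
  Adj i j := i ≠ j ∧ (i.val < 3 ∨ j.val < 3 ∨
    (circG m d).Adj ((i.val - 3 : ℕ) : ZMod m) ((j.val - 3 : ℕ) : ZMod m))
  symm := by
    constructor
    rintro i j ⟨hne, h⟩
    refine ⟨hne.symm, ?_⟩
    rcases h with h | h | h
    · right; left; exact h
    · left; exact h
    · right; right; exact (circG m d).symm.symm _ _ h
  loopless := ⟨fun i h => h.1 rfl⟩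

instance (m d : ℕ) [NeZero m] : DecidableRel (coneG m d).Adj :=
  fun i j => inferInstanceAs (Decidable (_ ∧ _))

lemma coneG_degree_lt {m d : ℕ} [NeZero m] (i : Fin (3 + m)) (hi : i.val < 3) :
    (coneG m d).degree i = (3 + m) - 1 := by
  rw [SimpleGraph.degree]
  have h : (coneG m d).neighborFinset i = univ.erase i := by
    ext j
    rw [SimpleGraph.mem_neighborFinset]
    simp only [mem_erase, mem_univ, and_true]
    constructor
    · rintro ⟨hne, _⟩; exact fun h => hne h.symm
    · intro h; exact ⟨fun h' => h h'.symm, Or.inl hi⟩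
  rw [h, Finset.card_erase_of_mem (mem_univ i), Finset.card_univ, Fintype.card_fin]

lemma coneG_degree_ge {m d : ℕ} [NeZero m] (hme : Even m) (hd : d < m)
    (i : Fin (3 + m)) (hi : 3 ≤ i.val) :
    (coneG m d).degree i = d + 3 := by
  rw [SimpleGraph.degree]
  have hsplit : (coneG m d).neighborFinset i =
      (univ.filter (fun j : Fin (3 + m) => j.val < 3)) ∪
      (univ.filter (fun j : Fin (3 + m) => 3 ≤ j.val ∧
        (circG m d).Adj ((i.val - 3 : ℕ) : ZMod m) ((j.val - 3 : ℕ) : ZMod m))) := by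
    ext j
    rw [SimpleGraph.mem_neighborFinset]
    simp only [mem_union, mem_filter, mem_univ, true_and]
    constructor
    · rintro ⟨hne, h | h | h⟩
      · omega
      · left; exact h
      · by_cases hj : j.val < 3
        · left; exact hj
        · right; exact ⟨by omega, h⟩
    · rintro (h | ⟨h3, h⟩)
      · exact ⟨fun he => by omega, Or.inr (Or.inl h)⟩
      · refine ⟨?_, Or.inr (Or.inr h)⟩
        intro he
        rw [he] at h
        exact (circG m d).loopless.irrefl _ h
  have hdisj : Disjoint (univ.filter (fun j : Fin (3 + m) => j.val < 3))
      (univ.filter (fun j : Fin (3 + m) => 3 ≤ j.val ∧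
        (circG m d).Adj ((i.val - 3 : ℕ) : ZMod m) ((j.val - 3 : ℕ) : ZMod m))) := by
    rw [Finset.disjoint_left]
    intro a ha hb
    simp only [mem_filter, mem_univ, true_and] at ha hb
    omega
  have hc1 : (univ.filter (fun j : Fin (3 + m) => j.val < 3)).card = 3 := by
    have h : (univ.filter (fun j : Fin (3 + m) => j.val < 3)) =
        {(⟨0, by omega⟩ : Fin (3 + m)), ⟨1, by omega⟩, ⟨2, by omega⟩} := by
      ext j
      simp only [mem_filter, mem_univ, true_and, mem_insert, mem_singleton, Fin.ext_iff]
      omega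
    rw [h, Finset.card_insert_of_notMem (by simp [Fin.ext_iff]),
      Finset.card_insert_of_notMem (by simp [Fin.ext_iff]), Finset.card_singleton]
  have hc2 : (univ.filter (fun j : Fin (3 + m) => 3 ≤ j.val ∧
      (circG m d).Adj ((i.val - 3 : ℕ) : ZMod m) ((j.val - 3 : ℕ) : ZMod m))).card = d := by
    refine Eq.trans ?_ (circG_degree hme hd ((i.val - 3 : ℕ) : ZMod m))
    rw [SimpleGraph.degree]
    apply Finset.card_bij (fun j _ => ((j.val - 3 : ℕ) : ZMod m))
    · intro j hj
      simp only [mem_filter, mem_univ, true_and] at hj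
      rw [SimpleGraph.mem_neighborFinset]
      exact hj.2
    · intro a ha b hb h
      simp only [mem_filter, mem_univ, true_and] at ha hb
      obtain ⟨ha1, -⟩ := ha
      obtain ⟨hb1, -⟩ := hb
      have hal := a.isLt
      have hbl := b.isLt
      have h' : ((a.val - 3 : ℕ) : ZMod m).val = ((b.val - 3 : ℕ) : ZMod m).val := by rw [h]
      rw [ZMod.val_cast_of_lt (by omega), ZMod.val_cast_of_lt (by omega)] at h'
      exact Fin.ext (by omega)
    · intro u hu
      rw [SimpleGraph.mem_neighborFinset] at hu
      have hlt : u.val < m := ZMod.val_lt u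
      have hcast : ((u.val + 3 - 3 : ℕ) : ZMod m) = u := by
        simp only [Nat.add_sub_cancel]
        exact ZMod.natCast_rightInverse u
      refine ⟨⟨u.val + 3, by omega⟩, ?_, hcast⟩
      simp only [mem_filter, mem_univ, true_and]
      exact ⟨by simp, by rw [hcast]; exact hu⟩
  rw [hsplit, Finset.card_union_of_disjoint hdisj, hc1, hc2]
  omega

lemma cone3 (N m d : ℕ) (hN : N = 3 + m) (hm : 0 < m) (hd : d < m) (hme : Even m) :
    ∃ (G : SimpleGraph (Fin N)) (_ : DecidableRel G.Adj),
      (∀ i : Fin N, i.val < 3 → G.degree i = N - 1) ∧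
      (∀ i : Fin N, 3 ≤ i.val → G.degree i = d + 3) := by
  subst hN
  haveI : NeZero m := ⟨hm.ne'⟩
  exact ⟨coneG m d, inferInstance, fun i hi => coneG_degree_lt i hi,
    fun i hi => coneG_degree_ge hme hd i hi⟩

theorem seq_k3_minus_graphic {n x : ℕ} (hn : Even n) (hx1 : 6 ≤ x) (hx2 : x ≤ n - 4) :
    IsGraphicList ([n - 4, n - 4, n - 4] ++ List.replicate (n - 6) (x - 3)) := by
  have hn10 : 10 ≤ n := by omega
  set l : List ℕ := [n - 4, n - 4, n - 4] ++ List.replicate (n - 6) (x - 3) with hl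
  have hlen : l.length = 3 + (n - 6) := by simp [hl]; omega
  have hme : Even (n - 6) := by
    rw [Nat.even_iff] at hn ⊢
    omega
  obtain ⟨G, inst, h1, h2⟩ := cone3 l.length (n - 6) (x - 6) hlen (by omega) (by omega) hme
  refine ⟨G, inst, fun i => ?_⟩
  have hil : i.val < l.length := i.isLt
  rw [List.get_eq_getElem]
  by_cases hi : i.val < 3
  · rw [List.getElem_append_left (by simpa using hi)]
    have hdeg := h1 i hi
    have : i.val < 3 → ([n - 4, n - 4, n - 4] : List ℕ)[i.val]'(by simpa using hi) = n - 4 := by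
      intro h
      interval_cases h : i.val <;> rfl
    rw [this hi, hdeg, hlen]
    omega
  · rw [List.getElem_append_right (by simp only [List.length_cons, List.length_nil]; omega),
      List.getElem_replicate]
    rw [h2 i (by omega)]
    omega
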